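/- Let m be a positive integer and a an integer with a > m. Then ∑_{k=1}^{m} ψ₀²(k)/(a+1-k) = ∑_{k=1}^{m} ( ψ₀²(k+a-m)/k + ψ₀²(k)/(k+a-m) + ψ₁(k+a-m)/(k+a-m) ) + (2/(a-m) - 2ψ₀(a+1))·∑_{k=1}^{m} ψ₀(k+a-m)/k + (1/(a-m)²)·(ψ₀(a-m+1) - ψ₀(a+1) + ψ₀(m+1) - ψ₀(1)) + (1/(a-m))·( 2ψ₀(a+1)·(-ψ₀(a-m+1) - ψ₀(m+1) + ψ₀(1)) + ψ₀²(a-m+1) + ψ₀²(a+1) ) + (1/6)·( -6ψ₀²(a+1)·(ψ₀(a-m+1) - ψ₀(m+1)) - 6ψ₀(a+1)·(-ψ₀²(a-m+1) + 2ψ₀(1)·ψ₀(a-m+1) + ψ₁(a-m+1)) - 2ψ₀³(a-m+1) + 6ψ₀(1)·ψ₀²(a-m+1) - 6ψ₀(1)·ψ₁(a-m+1) + 6ψ₀(a-m+1)·ψ₁(a-m+1) + ψ₂(a-m+1) + 2ψ₀³(a+1) + 6ψ₀(1)·ψ₁(a+1) - ψ₂(a+1) ). -/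

import Mathlib

open Finset

/-- Digamma function at a positive integer argument: `ψ₀ l = -γ + ∑_{i=1}^{l-1} 1/i`. -/
noncomputable def ψ₀ (l : ℕ) : ℝ :=
  -Real.eulerMascheroniConstant + ∑ i ∈ Finset.range (l - 1), (1 : ℝ) / (i + 1)

/-- Trigamma function at a positive integer argument: `ψ₁ l = π²/6 - ∑_{i=1}^{l-1} 1/i²`. -/
noncomputable def ψ₁ (l : ℕ) : ℝ :=
  Real.pi ^ 2 / 6 - ∑ i ∈ Finset.range (l - 1), (1 : ℝ) / (i + 1) ^ 2

/-- Tetragamma function at a positive integer argument: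
`ψ₂ l = -2ζ(3) + 2∑_{i=1}^{l-1} 1/i³`, where `ζ(3) = ∑_{i=1}^∞ 1/i³`. -/
noncomputable def ψ₂ (l : ℕ) : ℝ :=
  -2 * (∑' i : ℕ, (1 : ℝ) / (i + 1) ^ 3) +
    2 * ∑ i ∈ Finset.range (l - 1), (1 : ℝ) / (i + 1) ^ 3

lemma psi0_succ (n : ℕ) : ψ₀ (n + 2) = ψ₀ (n + 1) + 1 / ((n : ℝ) + 1) := by
  simp only [ψ₀, show n+2-1 = n+1 from rfl, show n+1-1 = n from rfl,
    Finset.sum_range_succ]; ring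

lemma psi1_succ (n : ℕ) : ψ₁ (n + 2) = ψ₁ (n + 1) - 1 / ((n : ℝ) + 1) ^ 2 := by
  simp only [ψ₁, show n+2-1 = n+1 from rfl, show n+1-1 = n from rfl,
    Finset.sum_range_succ]; ring

lemma psi2_succ (n : ℕ) : ψ₂ (n + 2) = ψ₂ (n + 1) + 2 / ((n : ℝ) + 1) ^ 3 := by
  simp only [ψ₂, show n+2-1 = n+1 from rfl, show n+1-1 = n from rfl,
    Finset.sum_range_succ]; ring

lemma psi0_pred {m k : ℕ} (h : k < m) :
    ψ₀ (m + 1 - k) = ψ₀ (m - k) + 1 / ((m : ℝ) - k) := by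
  obtain ⟨j, hj⟩ : ∃ j, m - k = j + 1 := ⟨m - k - 1, by omega⟩
  have h1 : m + 1 - k = j + 2 := by omega
  have h2 : ((m : ℝ) - k) = (j : ℝ) + 1 := by
    have hm : m = j + 1 + k := by omega
    subst hm; push_cast; ring
  rw [h1, hj, h2, psi0_succ]

lemma sum_inv_shift (c : ℕ) : ∀ m : ℕ,
    ∑ k ∈ Finset.range m, (1:ℝ)/((k:ℝ)+1+c) = ψ₀ (m+c+1) - ψ₀ (c+1) := by
  intro m
  induction m with
  | zero => simp
  | succ m ih =>
    rw [Finset.sum_range_succ, ih]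
    have h1 : m+1+c+1 = m+c+2 := by omega
    have h2 : ((m:ℝ)+1+c) = ((m+c : ℕ) : ℝ) + 1 := by push_cast; ring
    rw [h1, psi0_succ (m+c), h2]
    ring

lemma sum_inv_rev : ∀ m : ℕ,
    ∑ k ∈ Finset.range m, (1:ℝ)/((m:ℝ)-k) = ψ₀ (m+1) - ψ₀ 1 := by
  intro m
  induction m with
  | zero => simp
  | succ m ih =>
    rw [Finset.sum_range_succ']
    have hc : ∀ k ∈ Finset.range m,
        (1:ℝ)/(((m+1:ℕ):ℝ) - ((k+1:ℕ):ℝ)) = 1/((m:ℝ)-k) := by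
      intro k _; push_cast; ring_nf
    rw [Finset.sum_congr rfl hc, ih, psi0_succ m]
    push_cast; ring

lemma sum_inv_sq_rev : ∀ m : ℕ,
    ∑ k ∈ Finset.range m, (1:ℝ)/((m:ℝ)-k)^2 = ψ₁ 1 - ψ₁ (m+1) := by
  intro m
  induction m with
  | zero => simp
  | succ m ih =>
    rw [Finset.sum_range_succ']
    have hc : ∀ k ∈ Finset.range m,
        (1:ℝ)/(((m+1:ℕ):ℝ) - ((k+1:ℕ):ℝ))^2 = 1/((m:ℝ)-k)^2 := by
      intro k _; push_cast; ring_nf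
    rw [Finset.sum_congr rfl hc, ih, psi1_succ m]
    push_cast; ring

lemma sum_psi_rev : ∀ m : ℕ,
    ∑ k ∈ Finset.range m, ψ₀ (m-k)/((m:ℝ)-k)
      = (ψ₀ (m+1)^2 - ψ₀ 1^2 + ψ₁ (m+1) - ψ₁ 1)/2 := by
  intro m
  induction m with
  | zero => simp
  | succ m ih =>
    rw [Finset.sum_range_succ']
    have hc : ∀ k ∈ Finset.range m,
        ψ₀ (m+1-(k+1))/(((m+1:ℕ):ℝ) - ((k+1:ℕ):ℝ)) = ψ₀ (m-k)/((m:ℝ)-k) := by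
      intro k _
      have : m+1-(k+1) = m-k := by omega
      rw [this]; push_cast; ring_nf
    rw [Finset.sum_congr rfl hc, ih, psi0_succ m, psi1_succ m]
    have hm1 : ((m:ℝ)+1) ≠ 0 := by positivity
    simp only [Nat.sub_zero, Nat.cast_zero]
    field_simp
    push_cast; ring

lemma Tlemma (d : ℕ) (hd : 0 < d) : ∀ m : ℕ,
    ∑ k ∈ Finset.range m, ψ₀ (m-k) / ((k:ℝ)+1+d)
      = -(∑ k ∈ Finset.range m, ψ₀ (k+1+d)/((k:ℝ)+1))
        + ψ₀ (m+1)*ψ₀ (m+d+1) + (ψ₀ (m+d+1)^2 + ψ₁ (m+d+1))/2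
        - ψ₀ (d+1)*ψ₀ (m+d+1)
        - (1/(d:ℝ))*(ψ₀ (m+1) - ψ₀ 1) + (1/(d:ℝ))*(ψ₀ (m+d+1) - ψ₀ (d+1))
        + ψ₀ (d+1)^2 - ψ₀ 1*ψ₀ (d+1) - (ψ₀ (d+1)^2 + ψ₁ (d+1))/2 := by
  intro m
  have hdR : ((d:ℝ)) ≠ 0 := Nat.cast_ne_zero.2 hd.ne'
  induction m with
  | zero => simp; ring
  | succ m ih =>
    have hs : ((m:ℝ)+1+(d:ℝ)) ≠ 0 := by positivity
    have hm1 : ((m:ℝ)+1) ≠ 0 := by positivity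
    rw [Finset.sum_range_succ]
    have hc : ∀ k ∈ Finset.range m,
        ψ₀ (m+1-k) / ((k:ℝ)+1+d)
          = ψ₀ (m-k)/((k:ℝ)+1+d)
            + (1/((m:ℝ)+1+d)) * (1/((m:ℝ)-k))
            + (1/((m:ℝ)+1+d)) * (1/((k:ℝ)+1+d)) := by
      intro k hk
      rw [Finset.mem_range] at hk
      rw [psi0_pred hk]
      have hmk : ((m:ℝ)-k) ≠ 0 := by
        have : (k:ℝ) < m := Nat.cast_lt.2 hk
        intro h; nlinarith
      have hk1 : ((k:ℝ)+1+(d:ℝ)) ≠ 0 := by positivity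
      field_simp
      ring
    rw [Finset.sum_congr rfl hc, Finset.sum_add_distrib, Finset.sum_add_distrib,
      ← Finset.mul_sum, ← Finset.mul_sum, ih, sum_inv_rev m, sum_inv_shift d m,
      Finset.sum_range_succ]
    have e1 : m+1-m = 1 := by omega
    have e2 : m+1+1 = m+2 := by omega
    have e3 : m+1+d+1 = (m+d)+2 := by omega
    have e4 : m+1+d = (m+d)+1 := by omega
    rw [e1, e2, e3, e4, psi0_succ m, psi0_succ (m+d), psi1_succ (m+d)]
    push_cast
    field_simp
    ring

set_option maxHeartbeats 4000000 in
lemma core (U p q r e p2 q2 r2 e2 q3 r3 D M S : ℝ)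
    (hM : M ≠ 0) (hS : S ≠ 0) (hD : D ≠ 0) (h : S = M + D) :
    e^2/S + (2/S)*((p^2 - e^2 + p2 - e2)/2)
      + (2/S)*(-U + (p*q + (q^2+q2)/2 - r*q + (e-p)/D + (q-r)/D
          + r^2 - e*r - (r^2+r2)/2))
      + (1/S)*(e2-p2) + (1/S^2)*(p-e) + (1/S^2)*(q-r)
      + ((2/D - 2*q)*U
        + (1/D^2)*(r - q + p - e)
        + (1/D)*(2*q*(-r-p+e) + r^2 + q^2)
        + (1/6)*(-6*q^2*(r-p) - 6*q*(-r^2+2*e*r+r2)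
            - 2*r^3 + 6*e*r^2 - 6*e*r2 + 6*r*r2 + r3 + 2*q^3 + 6*e*q2 - q3))
    = (q^2/M + p^2/S + q2/S)
      + ((2/D - 2*(q+1/S))*(U + q/M)
        + (1/D^2)*(r - (q+1/S) + (p+1/M) - e)
        + (1/D)*(2*(q+1/S)*(-r-(p+1/M)+e) + r^2 + (q+1/S)^2)
        + (1/6)*(-6*(q+1/S)^2*(r-(p+1/M))
            - 6*(q+1/S)*(-r^2+2*e*r+r2)
            - 2*r^3 + 6*e*r^2 - 6*e*r2 + 6*r*r2 + r3 + 2*(q+1/S)^3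
            + 6*e*(q2-1/S^2) - (q3+2/S^3))) := by
  have hD2 : D = S - M := by rw [h]; ring
  subst hD2
  have hD' : S - M ≠ 0 := hD
  field_simp
  ring

set_option maxHeartbeats 4000000 in
lemma mainlemma (d : ℕ) (hd : 0 < d) : ∀ m : ℕ,
    ∑ k ∈ Finset.range m, ψ₀ (m-k)^2 / ((k:ℝ)+1+d)
      = ∑ k ∈ Finset.range m, (ψ₀ (k+1+d)^2/((k:ℝ)+1) + ψ₀ (k+1)^2/((k:ℝ)+1+d)
            + ψ₁ (k+1+d)/((k:ℝ)+1+d))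
        + (2/(d:ℝ) - 2*ψ₀ (m+d+1)) * ∑ k ∈ Finset.range m, ψ₀ (k+1+d)/((k:ℝ)+1)
        + (1/(d:ℝ)^2) * (ψ₀ (d+1) - ψ₀ (m+d+1) + ψ₀ (m+1) - ψ₀ 1)
        + (1/(d:ℝ)) * (2*ψ₀ (m+d+1)*(-ψ₀ (d+1) - ψ₀ (m+1) + ψ₀ 1)
            + ψ₀ (d+1)^2 + ψ₀ (m+d+1)^2)
        + (1/6) * (-6*ψ₀ (m+d+1)^2*(ψ₀ (d+1) - ψ₀ (m+1))
          - 6*ψ₀ (m+d+1)*(-ψ₀ (d+1)^2 + 2*ψ₀ 1*ψ₀ (d+1) + ψ₁ (d+1))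
          - 2*ψ₀ (d+1)^3 + 6*ψ₀ 1*ψ₀ (d+1)^2 - 6*ψ₀ 1*ψ₁ (d+1)
          + 6*ψ₀ (d+1)*ψ₁ (d+1) + ψ₂ (d+1) + 2*ψ₀ (m+d+1)^3
          + 6*ψ₀ 1*ψ₁ (m+d+1) - ψ₂ (m+d+1)) := by
  intro m
  have hdR : ((d:ℝ)) ≠ 0 := Nat.cast_ne_zero.2 hd.ne'
  induction m with
  | zero => simp; ring
  | succ m ih =>
    have hs : ((m:ℝ)+1+(d:ℝ)) ≠ 0 := by positivity
    have hm1 : ((m:ℝ)+1) ≠ 0 := by positivity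
    rw [Finset.sum_range_succ]
    have hc : ∀ k ∈ Finset.range m,
        ψ₀ (m+1-k)^2 / ((k:ℝ)+1+d)
          = ψ₀ (m-k)^2/((k:ℝ)+1+d)
            + (2/((m:ℝ)+1+d)) * (ψ₀ (m-k)/((m:ℝ)-k))
            + (2/((m:ℝ)+1+d)) * (ψ₀ (m-k)/((k:ℝ)+1+d))
            + (1/((m:ℝ)+1+d)) * (1/((m:ℝ)-k)^2)
            + (1/((m:ℝ)+1+d)^2) * (1/((m:ℝ)-k))
            + (1/((m:ℝ)+1+d)^2) * (1/((k:ℝ)+1+d)) := by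
      intro k hk
      rw [Finset.mem_range] at hk
      rw [psi0_pred hk]
      have hmk : ((m:ℝ)-k) ≠ 0 := by
        have : (k:ℝ) < m := Nat.cast_lt.2 hk
        intro h; nlinarith
      have hk1 : ((k:ℝ)+1+(d:ℝ)) ≠ 0 := by positivity
      field_simp
      ring
    rw [Finset.sum_congr rfl hc, Finset.sum_add_distrib, Finset.sum_add_distrib,
      Finset.sum_add_distrib, Finset.sum_add_distrib, Finset.sum_add_distrib,
      ← Finset.mul_sum, ← Finset.mul_sum, ← Finset.mul_sum, ← Finset.mul_sum,
      ← Finset.mul_sum, ih, sum_psi_rev m, Tlemma d hd m, sum_inv_sq_rev m,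
      sum_inv_rev m, sum_inv_shift d m, Finset.sum_range_succ,
      Finset.sum_range_succ]
    have e1 : m+1-m = 1 := by omega
    have e2 : m+1+1 = m+2 := by omega
    have e3 : m+1+d+1 = (m+d)+2 := by omega
    have e4 : m+1+d = (m+d)+1 := by omega
    rw [e1, e2, e3, e4, psi0_succ m, psi0_succ (m+d), psi1_succ (m+d),
      psi2_succ (m+d)]
    push_cast
    linear_combination core (∑ k ∈ Finset.range m, ψ₀ (k+1+d) / ((k:ℝ)+1))
      (ψ₀ (m+1)) (ψ₀ (m+d+1)) (ψ₀ (d+1)) (ψ₀ 1) (ψ₁ (m+1)) (ψ₁ (m+d+1))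
      (ψ₁ (d+1)) (ψ₁ 1) (ψ₂ (m+d+1)) (ψ₂ (d+1)) ((d:ℝ)) ((m:ℝ)+1)
      ((m:ℝ)+1+(d:ℝ)) hm1 hs hdR (by ring)

theorem stmt6 (m a : ℕ) (hm : 0 < m) (ha : m < a) :
    ∑ k ∈ Finset.Icc 1 m, ψ₀ k ^ 2 / ((a + 1 - k : ℕ) : ℝ) =
      ∑ k ∈ Finset.Icc 1 m, (ψ₀ (k + a - m) ^ 2 / (k : ℝ) +
          ψ₀ k ^ 2 / ((k + a - m : ℕ) : ℝ) + ψ₁ (k + a - m) / ((k + a - m : ℕ) : ℝ)) +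
        (2 / ((a : ℝ) - m) - 2 * ψ₀ (a + 1)) *
          ∑ k ∈ Finset.Icc 1 m, ψ₀ (k + a - m) / (k : ℝ) +
        (1 / ((a : ℝ) - m) ^ 2) *
          (ψ₀ (a - m + 1) - ψ₀ (a + 1) + ψ₀ (m + 1) - ψ₀ 1) +
        (1 / ((a : ℝ) - m)) *
          (2 * ψ₀ (a + 1) * (-ψ₀ (a - m + 1) - ψ₀ (m + 1) + ψ₀ 1) +
            ψ₀ (a - m + 1) ^ 2 + ψ₀ (a + 1) ^ 2) +
        (1 / 6) * (-6 * ψ₀ (a + 1) ^ 2 * (ψ₀ (a - m + 1) - ψ₀ (m + 1)) -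
          6 * ψ₀ (a + 1) * (-ψ₀ (a - m + 1) ^ 2 + 2 * ψ₀ 1 * ψ₀ (a - m + 1) +
            ψ₁ (a - m + 1)) -
          2 * ψ₀ (a - m + 1) ^ 3 + 6 * ψ₀ 1 * ψ₀ (a - m + 1) ^ 2 -
          6 * ψ₀ 1 * ψ₁ (a - m + 1) + 6 * ψ₀ (a - m + 1) * ψ₁ (a - m + 1) +
          ψ₂ (a - m + 1) + 2 * ψ₀ (a + 1) ^ 3 + 6 * ψ₀ 1 * ψ₁ (a + 1) - ψ₂ (a + 1)) := by
  obtain ⟨d, rfl⟩ : ∃ d, a = m + d := ⟨a - m, by omega⟩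
  have hd : 0 < d := by omega
  simp only [show ∀ k, k + (m + d) - m = k + d from fun k => by omega,
    show m + d - m = d from by omega]
  have e6 : ((m + d : ℕ) : ℝ) - (m : ℕ) = (d : ℝ) := by push_cast; ring
  rw [e6]
  have hL : (∑ k ∈ Finset.Icc 1 m, ψ₀ k ^ 2 / ((m + d + 1 - k : ℕ) : ℝ))
      = ∑ k ∈ Finset.range m, ψ₀ (m - k) ^ 2 / ((k : ℝ) + 1 + d) := by
    rw [← Finset.Ico_add_one_right_eq_Icc, Finset.sum_Ico_eq_sum_range]
    simp only [show m + 1 - 1 = m from rfl]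
    rw [← Finset.sum_range_reflect]
    apply Finset.sum_congr rfl
    intro k hk
    rw [Finset.mem_range] at hk
    have h1 : 1 + (m - 1 - k) = m - k := by omega
    have h2 : m + d + 1 - (m - k) = k + 1 + d := by omega
    rw [h1, h2]
    push_cast
    ring
  have hS1 : (∑ k ∈ Finset.Icc 1 m, (ψ₀ (k + d) ^ 2 / (k : ℝ) +
        ψ₀ k ^ 2 / ((k + d : ℕ) : ℝ) + ψ₁ (k + d) / ((k + d : ℕ) : ℝ)))
      = ∑ k ∈ Finset.range m, (ψ₀ (k + 1 + d) ^ 2 / ((k : ℝ) + 1)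
          + ψ₀ (k + 1) ^ 2 / ((k : ℝ) + 1 + d) + ψ₁ (k + 1 + d) / ((k : ℝ) + 1 + d)) := by
    rw [← Finset.Ico_add_one_right_eq_Icc, Finset.sum_Ico_eq_sum_range]
    simp only [show m + 1 - 1 = m from rfl]
    apply Finset.sum_congr rfl
    intro k hk
    have h1 : 1 + k + d = k + 1 + d := by omega
    have h2 : 1 + k = k + 1 := by omega
    rw [h1, h2]
    push_cast
    ring
  have hU : (∑ k ∈ Finset.Icc 1 m, ψ₀ (k + d) / (k : ℝ))
      = ∑ k ∈ Finset.range m, ψ₀ (k + 1 + d) / ((k : ℝ) + 1) := by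
    rw [← Finset.Ico_add_one_right_eq_Icc, Finset.sum_Ico_eq_sum_range]
    simp only [show m + 1 - 1 = m from rfl]
    apply Finset.sum_congr rfl
    intro k hk
    have h1 : 1 + k + d = k + 1 + d := by omega
    have h2 : 1 + k = k + 1 := by omega
    rw [h1, h2]
    push_cast
    ring
  rw [hL, hS1, hU]
  exact mainlemma d hd m
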